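/- Let (λ, μ) be a codimension-3 decoration with k = ∑μⱼ, b nonzero parts of λ, and suppose λ₁ ≥ 2 (i.e., the decoration is not Gorenstein). Then b ≤ k + 2. -/

import Mathlib

/-- Sort a list of integers in non-increasing order. -/
def rsort (l : List ℤ) : List ℤ := List.insertionSort (· ≥ ·) l

/-- Remove all non-positive parts (trailing zeros) from a partition. -/
def strip (l : List ℤ) : List ℤ := l.filter (fun x => 0 < x)

/-- The smallest minimal link of a codimension-`c` pair of partitions `(λ, μ)`:
choose the `c` largest parts of `λ` (padding with zeros if needed), shift them by
`p = (c-2)k + 1 - (λ₁ + ⋯ + λ_c)` where `k = ∑ μⱼ`, merge with `μ` and re-sort;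
the other partition becomes `(λ_{c+1}, …, λ_b)`. -/
def smlink (c : ℕ) (P : List ℤ × List ℤ) : List ℤ × List ℤ :=
  let p : ℤ := ((c : ℤ) - 2) * P.2.sum + 1 - (P.1.take c).sum
  (strip (rsort ((P.1.take c ++ List.replicate (c - P.1.length) 0).map (· + p) ++ P.2)),
   strip (P.1.drop c))

/-- The smallest minimal link of `P` produces nonnegative parts, i.e. `λ_c + p ≥ 0`. -/
def ValidLink (c : ℕ) (P : List ℤ × List ℤ) : Prop :=
  0 ≤ P.1.getD (c - 1) 0 + (((c : ℤ) - 2) * P.2.sum + 1 - (P.1.take c).sum)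

/-- A partition: a non-increasing list of positive integers. -/
def IsPartition (l : List ℤ) : Prop := l.Pairwise (· ≥ ·) ∧ ∀ x ∈ l, 0 < x

/-- A codimension-`c` decoration: a pair of partitions reachable to the complete
intersection pair `((1^c), (1))` by finitely many smallest minimal links, all of
whose intermediate links are valid (have nonnegative parts). -/
def IsDecoration (c : ℕ) (P : List ℤ × List ℤ) : Prop :=
  IsPartition P.1 ∧ IsPartition P.2 ∧
  ∃ n : ℕ, (∀ m < n, ValidLink c ((smlink c)^[m] P)) ∧
    (smlink c)^[n] P = (List.replicate c 1, [1])

namespace Aux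

lemma sorted_rsort (l : List ℤ) : (rsort l).Pairwise (· ≥ ·) := List.pairwise_insertionSort _ l

lemma perm_rsort (l : List ℤ) : List.Perm (rsort l) l := List.perm_insertionSort _ l

lemma rsort_eq {l : List ℤ} (h : l.Pairwise (· ≥ ·)) : rsort l = l := List.Pairwise.insertionSort_eq h

lemma sorted_strip {l : List ℤ} (h : l.Pairwise (· ≥ ·)) : (strip l).Pairwise (· ≥ ·) :=
  List.Pairwise.filter _ h

lemma pos_strip {l : List ℤ} : ∀ x ∈ strip l, 0 < x := by
  intro x hx
  have := List.of_mem_filter hx; simpa using this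

lemma strip_eq_self {l : List ℤ} (h : ∀ x ∈ l, 0 < x) : strip l = l := by
  rw [strip, List.filter_eq_self]; intro a ha; simpa using h a ha

lemma sum_strip {l : List ℤ} (h : ∀ x ∈ l, 0 ≤ x) : (strip l).sum = l.sum := by
  induction l with
  | nil => rfl
  | cons a l ih =>
    have ha := h a (by simp)
    have ihl : (strip l).sum = l.sum := ih (fun x hx => h x (by simp [hx]))
    simp only [strip, List.filter_cons] at ihl ⊢
    split
    · simp only [List.sum_cons]; omega
    · rename_i hcond
      simp only [decide_eq_true_eq] at hcond
      have : a = 0 := by omega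
      simp only [List.sum_cons]; omega

lemma isPartition_strip_rsort (l : List ℤ) : IsPartition (strip (rsort l)) :=
  ⟨sorted_strip (sorted_rsort l), fun x hx => pos_strip x hx⟩

lemma sum_strip_rsort {l : List ℤ} (h : ∀ x ∈ l, 0 ≤ x) : (strip (rsort l)).sum = l.sum := by
  rw [sum_strip (fun x hx => h x ((perm_rsort l).mem_iff.mp hx)), (perm_rsort l).sum_eq]

lemma strip_rsort_of_pos {l : List ℤ} (h : ∀ x ∈ l, 0 < x) : strip (rsort l) = rsort l :=
  strip_eq_self (fun x hx => h x ((perm_rsort l).mem_iff.mp hx))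

lemma sum_nonneg_of_pos {l : List ℤ} (h : ∀ x ∈ l, 0 < x) : 0 ≤ l.sum :=
  List.sum_nonneg (fun x hx => le_of_lt (h x hx))

lemma length_le_sum {l : List ℤ} (h : ∀ x ∈ l, 0 < x) : (l.length : ℤ) ≤ l.sum := by
  induction l with
  | nil => simp
  | cons a l ih =>
    have := h a (by simp)
    have := ih (fun x hx => h x (by simp [hx]))
    simp only [List.length_cons, List.sum_cons]
    push_cast
    omega

lemma head_max {A : ℤ} {l : List ℤ} (h : (A::l).Pairwise (· ≥ ·)) {x : ℤ} (hx : x ∈ A::l) :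
    x ≤ A := by
  rcases List.mem_cons.mp hx with rfl | hx'
  · exact le_rfl
  · exact List.rel_of_pairwise_cons h (a' := x) hx'

lemma second_ge {A B : ℤ} {l : List ℤ} (h : (A::B::l).Pairwise (· ≥ ·)) {v : ℤ}
    (hc : 2 ≤ (A::B::l).countP (fun x => decide (v ≤ x))) : v ≤ B := by
  by_contra hB
  push_neg at hB
  have h0 : (B::l).countP (fun x => decide (v ≤ x)) = 0 := by
    rw [List.countP_eq_zero]
    intro x hx
    have : x ≤ B := head_max h.of_cons hx
    simp; omega
  rw [List.countP_cons, h0] at hc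
  split at hc <;> omega

lemma third_ge {A B C : ℤ} {l : List ℤ} (h : (A::B::C::l).Pairwise (· ≥ ·)) {v : ℤ}
    (hc : 3 ≤ (A::B::C::l).countP (fun x => decide (v ≤ x))) : v ≤ C := by
  by_contra hC
  push_neg at hC
  have h0 : (C::l).countP (fun x => decide (v ≤ x)) = 0 := by
    rw [List.countP_eq_zero]
    intro x hx
    have : x ≤ C := head_max h.of_cons.of_cons hx
    simp; omega
  rw [List.countP_cons, List.countP_cons, h0] at hc
  split at hc <;> split at hc <;> omega

lemma count_le_sum {l : List ℤ} (h : ∀ x ∈ l, 0 < x) {v : ℤ} (hv : 0 ≤ v) (j : ℕ)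
    (hc : j ≤ l.countP (fun x => decide (v ≤ x))) : (j : ℤ) * v ≤ l.sum := by
  induction l generalizing j with
  | nil => simp at hc; subst hc; simp
  | cons a l ih =>
    have hl : ∀ x ∈ l, 0 < x := fun x hx => h x (by simp [hx])
    rw [List.countP_cons] at hc
    by_cases hva : v ≤ a
    · rcases j with _ | j
      · simpa using sum_nonneg_of_pos h
      · have := ih hl j (by simp [hva] at hc; omega)
        simp only [List.sum_cons]
        push_cast
        nlinarith
    · have := ih hl j (by simp [hva] at hc; omega)
      have := h a (by simp)
      simp only [List.sum_cons]
      omega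


lemma smlink3_cons {p : ℤ} (a b c : ℤ) (r μ : List ℤ) (hp : p = μ.sum + 1 - (a + b + c)) :
    smlink 3 (a::b::c::r, μ) = (strip (rsort ([a + p, b + p, c + p] ++ μ)), strip r) := by
  subst hp
  simp only [smlink]
  norm_num
  ring_nf

lemma validlink3_cons {a b c : ℤ} {r μ : List ℤ} (h : ValidLink 3 (a::b::c::r, μ)) :
    0 ≤ c + (μ.sum + 1 - (a + b + c)) := by
  simp only [ValidLink] at h
  norm_num at h
  convert h using 1
  ring_nf

lemma smlink3_sum2 (P : List ℤ × List ℤ) (h1 : IsPartition P.1) :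
    (smlink 3 P).2.sum = (P.1.drop 3).sum := by
  apply sum_strip
  intro x hx
  exact le_of_lt (h1.2 x ((List.drop_sublist 3 P.1).mem hx))

lemma smlink3_sum1 (P : List ℤ × List ℤ) (h1 : IsPartition P.1) (h2 : IsPartition P.2)
    (hv : ValidLink 3 P) :
    (smlink 3 P).1.sum
      = (P.1.take 3).sum + 3*(P.2.sum + 1 - (P.1.take 3).sum) + P.2.sum := by
  obtain ⟨l, μ⟩ := P
  have hμ : ∀ x ∈ μ, (0:ℤ) ≤ x := fun x hx => le_of_lt (h2.2 x hx)
  simp only [ValidLink] at hv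
  rcases l with _ | ⟨a, _ | ⟨b, _ | ⟨c, r⟩⟩⟩
  · simp only [smlink]
    norm_num at hv ⊢
    rw [sum_strip_rsort]
    · simp; ring
    · intro x hx
      simp at hx
      rcases hx with rfl | hx
      · omega
      · exact hμ x hx
  · have ha : (0:ℤ) < a := h1.2 a (by simp)
    simp only [smlink]
    norm_num at hv ⊢
    rw [sum_strip_rsort]
    · simp; ring
    · intro x hx
      simp at hx
      rcases hx with rfl | rfl | hx
      · omega
      · omega
      · exact hμ x hx
  · have ha : (0:ℤ) < a := h1.2 a (by simp)
    have hb : (0:ℤ) < b := h1.2 b (by simp)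
    simp only [smlink]
    norm_num at hv ⊢
    rw [sum_strip_rsort]
    · simp; ring
    · intro x hx
      simp at hx
      rcases hx with rfl | rfl | rfl | hx
      · omega
      · omega
      · omega
      · exact hμ x hx
  · have hab : a ≥ b := (List.pairwise_cons.mp h1.1).1 b (by simp)
    have hbc : b ≥ c := (List.pairwise_cons.mp (List.pairwise_cons.mp h1.1).2).1 c (by simp)
    have hc : (0:ℤ) < c := h1.2 c (by simp)
    simp only [smlink]
    norm_num at hv ⊢
    rw [sum_strip_rsort]
    · simp; ring
    · intro x hx
      simp at hx
      rcases hx with rfl | rfl | rfl | hx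
      · omega
      · omega
      · omega
      · exact hμ x hx

lemma iterate_shift {n : ℕ} {P : List ℤ × List ℤ}
    (hv : ∀ m < n + 1, ValidLink 3 ((smlink 3)^[m] P))
    (hT : (smlink 3)^[n+1] P = (List.replicate 3 1, [1])) :
    (∀ m < n, ValidLink 3 ((smlink 3)^[m] (smlink 3 P))) ∧
      (smlink 3)^[n] (smlink 3 P) = (List.replicate 3 1, [1]) := by
  constructor
  · intro m hm
    have := hv (m+1) (by omega)
    rwa [Function.iterate_succ_apply] at this
  · rwa [Function.iterate_succ_apply] at hT

lemma isPartition_smlink1 (P : List ℤ × List ℤ) : IsPartition (smlink 3 P).1 :=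
  isPartition_strip_rsort _

lemma isPartition_smlink2 (P : List ℤ × List ℤ) (h1 : IsPartition P.1) :
    IsPartition (smlink 3 P).2 := by
  refine ⟨sorted_strip ?_, fun x hx => pos_strip x hx⟩
  exact List.Pairwise.sublist (List.drop_sublist 3 P.1) h1.1

lemma sumlem : ∀ (n : ℕ) (P : List ℤ × List ℤ), IsPartition P.1 → IsPartition P.2 →
    (∀ m < n, ValidLink 3 ((smlink 3)^[m] P)) →
    (smlink 3)^[n] P = (List.replicate 3 1, [1]) →
    P.1.sum = 2 * P.2.sum + 1 := by
  intro n
  induction n with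
  | zero =>
    intro P _ _ _ hT
    simp only [Function.iterate_zero_apply] at hT
    rw [hT]
    decide
  | succ n ih =>
    intro P h1 h2 hv hT
    obtain ⟨hv', hT'⟩ := iterate_shift hv hT
    have key := ih (smlink 3 P) (isPartition_smlink1 P) (isPartition_smlink2 P h1) hv' hT'
    rw [smlink3_sum1 P h1 h2 (hv 0 (by omega)), smlink3_sum2 P h1] at key
    have hsplit : (P.1.take 3).sum + (P.1.drop 3).sum = P.1.sum := List.sum_take_add_sum_drop _ _
    omega


lemma sorted_cons_of {a : ℤ} {l : List ℤ} (hl : l.Pairwise (· ≥ ·)) (h : ∀ x ∈ l, x ≤ a) :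
    (a::l).Pairwise (· ≥ ·) := List.pairwise_cons.mpr ⟨h, hl⟩

lemma sum_replicate_one (n : ℕ) : (List.replicate n (1:ℤ)).sum = n := by
  simp [List.sum_replicate]

lemma sorted_replicate (n : ℕ) (a : ℤ) : (List.replicate n a).Pairwise (· ≥ ·) :=
  (List.pairwise_replicate).mpr (Or.inr le_rfl)

lemma gorenstein (n : ℕ) (P : List ℤ × List ℤ) (h1 : IsPartition P.1) (h2 : IsPartition P.2)
    (hsum : P.1.sum = 2 * P.2.sum + 1)
    (hT : (smlink 3)^[n] P = (List.replicate 3 1, [1]))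
    (hg : P.1.getD 0 0 ≤ 1) : P.2.length ≤ 1 := by
  by_contra ht
  push_neg at ht
  obtain ⟨lam, μ⟩ := P
  simp only at h1 h2 hsum hg ht hT ⊢
  obtain ⟨k, hk⟩ : ∃ k : ℤ, μ.sum = k := ⟨μ.sum, rfl⟩
  rw [hk] at hsum
  obtain ⟨m1, m2, μr, hμd⟩ : ∃ m1 m2 μr, μ = m1::m2::μr := by
    rcases μ with _ | ⟨m1, _ | ⟨m2, μr⟩⟩
    · simp at ht
    · simp at ht
    · exact ⟨m1, m2, μr, rfl⟩
  have hμpos := h2.2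
  have hm2 : (1:ℤ) ≤ m2 := by have := hμpos m2 (by rw [hμd]; simp); omega
  have hμr : (0:ℤ) ≤ μr.sum := sum_nonneg_of_pos (fun x hx => hμpos x (by rw [hμd]; simp [hx]))
  have hm1m2' : m1 ≥ m2 := List.rel_of_pairwise_cons (hμd ▸ h2.1) (a' := m2) (by simp)
  have hm1m2 : m2 ≤ m1 := hm1m2'
  have hkval : k = m1 + m2 + μr.sum := by rw [← hk, hμd]; simp [List.sum_cons]; ring
  have hm1k : m1 ≤ k - 1 := by omega
  have hk2 : 2 ≤ k := by omega
  have hμm1 : ∀ x ∈ μ, x ≤ m1 := fun x hx => head_max (hμd ▸ h2.1) (hμd ▸ hx)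
  have hlam1 : ∀ x ∈ lam, x = 1 := by
    rcases lam with _ | ⟨h, tl⟩
    · simp at hsum; omega
    · intro x hx
      have hx1 : x ≤ h := head_max h1.1 hx
      have := h1.2 x hx
      simp only [List.getD_cons_zero] at hg
      omega
  have hlamrep : lam = List.replicate lam.length 1 := List.eq_replicate_length.mpr hlam1
  have hLsum : (lam.length : ℤ) = 2 * k + 1 := by
    conv at hsum => rw [hlamrep]
    rw [sum_replicate_one] at hsum
    omega
  obtain ⟨L', hL'⟩ : ∃ L', lam.length = L' + 3 := ⟨lam.length - 3, by omega⟩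
  have hlamdec : lam = 1::1::1::List.replicate L' 1 := by
    rw [hlamrep, hL', show L' + 3 = 3 + L' by ring, List.replicate_add]
    rfl
  have hL'k : (L' : ℤ) = 2 * k - 2 := by omega
  -- the two-step cycle
  have hμk1 : ∀ x ∈ μ, x ≤ k - 1 := fun x hx => le_trans (hμm1 x hx) (by omega)
  have hs1 : ((k-1)::μ).Pairwise (· ≥ ·) := sorted_cons_of h2.1 hμk1
  have hs2 : ((k-1)::(k-1)::μ).Pairwise (· ≥ ·) := sorted_cons_of hs1 (fun x hx => head_max hs1 hx)
  have hs3 : ((k-1)::(k-1)::(k-1)::μ).Pairwise (· ≥ ·) :=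
    sorted_cons_of hs2 (fun x hx => head_max hs2 hx)
  have hpos3 : ∀ x ∈ (k-1)::(k-1)::(k-1)::μ, (0:ℤ) < x := by
    intro x hx
    simp only [List.mem_cons] at hx
    rcases hx with rfl | rfl | rfl | hx
    · omega
    · omega
    · omega
    · exact hμpos x hx
  have hposrep : ∀ x ∈ List.replicate L' (1:ℤ), (0:ℤ) < x := by
    intro x hx
    rw [List.eq_of_mem_replicate hx]
    omega
  have step1 : smlink 3 (lam, μ) = ((k-1)::(k-1)::(k-1)::μ, List.replicate L' 1) := by
    rw [hlamdec,
      smlink3_cons 1 1 1 (List.replicate L' 1) μ (show k - 2 = μ.sum + 1 - (1+1+1) by rw [hk]; ring)]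
    rw [show (1:ℤ) + (k - 2) = k - 1 by ring]
    rw [show ([k-1, k-1, k-1] ++ μ) = (k-1)::(k-1)::(k-1)::μ from rfl]
    rw [rsort_eq hs3, strip_eq_self hpos3, strip_eq_self hposrep]
  have step2 : smlink 3 ((k-1)::(k-1)::(k-1)::μ, List.replicate L' 1) = (lam, μ) := by
    have hp2 : (2:ℤ) - k = (List.replicate L' (1:ℤ)).sum + 1 - ((k-1) + (k-1) + (k-1)) := by
      rw [sum_replicate_one]; omega
    rw [smlink3_cons (k-1) (k-1) (k-1) μ (List.replicate L' 1) hp2]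
    rw [show (k - 1) + ((2:ℤ) - k) = 1 by ring]
    rw [show ([(1:ℤ), 1, 1] ++ List.replicate L' 1) = List.replicate (L' + 3) 1 by
      rw [show L' + 3 = 3 + L' by ring, List.replicate_add]; rfl]
    rw [rsort_eq (sorted_replicate _ _), strip_eq_self (by
      intro x hx
      rw [List.eq_of_mem_replicate hx]; omega)]
    rw [strip_eq_self hμpos, ← hL', ← hlamrep]
  have hcyc : (smlink 3)^[2] (lam, μ) = (lam, μ) := by
    rw [show (2:ℕ) = 1 + 1 from rfl, Function.iterate_add_apply]
    simp only [Function.iterate_one]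
    rw [step1, step2]
  have heven : ∀ m, (smlink 3)^[2*m] (lam, μ) = (lam, μ) := by
    intro m
    induction m with
    | zero => simp
    | succ m ih =>
      rw [show 2*(m+1) = 2 + 2*m by ring, Function.iterate_add_apply, ih, hcyc]
  rcases Nat.even_or_odd n with ⟨m, hm⟩ | ⟨m, hm⟩
  · rw [show n = 2*m by omega, heven] at hT
    have : μ = [1] := congrArg Prod.snd hT
    rw [this] at ht
    simp at ht
  · rw [hm, show 2*m+1 = 1 + 2*m by ring, Function.iterate_add_apply, heven,
      Function.iterate_one, step1] at hT
    have h2nd : List.replicate L' (1:ℤ) = [1] := congrArg Prod.snd hT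
    have : L' = 1 := by
      have := congrArg List.length h2nd
      simpa using this
    omega


lemma mem_le_getD0 {l : List ℤ} (hs : l.Pairwise (· ≥ ·)) {x : ℤ} (hx : x ∈ l) :
    x ≤ l.getD 0 0 := by
  rcases l with _ | ⟨h, tl⟩
  · simp at hx
  · simpa using head_max hs hx

lemma mem_strip_rsort {L : List ℤ} {x : ℤ} (hx : x ∈ L) (hpos : 0 < x) :
    x ∈ strip (rsort L) := by
  rw [strip, List.mem_filter]
  exact ⟨(perm_rsort L).mem_iff.mpr hx, by simpa using hpos⟩

lemma count3_ge {A B C : ℤ} (l : List ℤ) (h1 : C ≤ A) (h2 : C ≤ B) :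
    3 ≤ (A::B::C::l).countP (fun x => decide (C ≤ x)) := by
  simp only [List.countP_cons, decide_eq_true_eq, if_pos h1, if_pos h2, if_pos (le_refl C)]
  omega

lemma countP_triple (v x y z : ℤ) :
    ([x, y, z]).countP (fun t => decide (v ≤ t)) =
      (if v ≤ x then 1 else 0) + (if v ≤ y then 1 else 0) + (if v ≤ z then 1 else 0) := by
  simp only [List.countP_cons, List.countP_nil, decide_eq_true_eq]
  split_ifs <;> omega

lemma countP_pos_of_mem {l : List ℤ} {x v : ℤ} (hx : x ∈ l) (hv : v ≤ x) :
    1 ≤ l.countP (fun t => decide (v ≤ t)) := by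
  have : 0 < l.countP (fun t => decide (v ≤ t)) :=
    List.countP_pos_iff.mpr ⟨x, hx, by simpa using hv⟩
  omega

lemma countP_pos_triple (x y z : ℤ) :
    ([x, y, z]).countP (fun t => decide (0 < t)) =
      (if 0 < x then 1 else 0) + (if 0 < y then 1 else 0) + (if 0 < z then 1 else 0) := by
  simp only [List.countP_cons, List.countP_nil, decide_eq_true_eq]
  split_ifs <;> omega

lemma mainlem : ∀ (n : ℕ) (P : List ℤ × List ℤ), IsPartition P.1 → IsPartition P.2 →
    (∀ m < n, ValidLink 3 ((smlink 3)^[m] P)) →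
    (smlink 3)^[n] P = (List.replicate 3 1, [1]) →
    2 ≤ P.1.getD 0 0 → (P.1.length : ℤ) ≤ P.2.sum + 2 := by
  intro n
  induction n using Nat.strong_induction_on with
  | _ n IH =>
  intro P h1 h2 hv hT hng
  have hsum := sumlem n P h1 h2 hv hT
  obtain ⟨lam, μ⟩ := P
  simp only at h1 h2 hv hT hng hsum ⊢
  obtain ⟨k, hk⟩ : ∃ k : ℤ, μ.sum = k := ⟨_, rfl⟩
  rw [hk] at hsum ⊢
  have hk0 : 0 ≤ k := hk ▸ sum_nonneg_of_pos h2.2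
  rcases lam with _ | ⟨a, _ | ⟨b, _ | ⟨c, r⟩⟩⟩
  · simp at hng
  · simp only [List.length_cons, List.length_nil]; push_cast; omega
  · simp only [List.length_cons, List.length_nil]; push_cast; omega
  · -- lam = a :: b :: c :: r
    have ha2 : 2 ≤ a := by simpa using hng
    have hab : b ≤ a := List.rel_of_pairwise_cons h1.1 (a' := b) (by simp)
    have hbc : c ≤ b := List.rel_of_pairwise_cons h1.1.of_cons (a' := c) (by simp)
    have hc1 : 1 ≤ c := h1.2 c (by simp)
    have hrpos : ∀ x ∈ r, (0:ℤ) < x := fun x hx => h1.2 x (by simp [hx])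
    have hrlen : (r.length : ℤ) ≤ r.sum := length_le_sum hrpos
    have hsum' : a + b + c + r.sum = 2 * k + 1 := by
      simp only [List.sum_cons] at hsum; omega
    simp only [List.length_cons]
    push_cast
    rcases r with _ | ⟨d, r0⟩
    · -- lam has exactly 3 parts
      simp only [List.sum_nil] at hsum'
      simp only [List.length_nil]
      omega
    · -- main case : at least 4 parts; suffices r.length ≤ k - 1
      obtain ⟨r, hrdef⟩ : ∃ r' : List ℤ, d :: r0 = r' := ⟨_, rfl⟩
      rw [hrdef] at hrpos hrlen hsum' h1 hv hT hng hsum ⊢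
      have hrne : r ≠ [] := by rw [← hrdef]; simp
      have hrs1 : 1 ≤ r.sum := by
        rcases r with _ | ⟨x, r1⟩
        · simp at hrne
        · have := hrpos x (by simp)
          have : (0:ℤ) ≤ r1.sum := sum_nonneg_of_pos (fun y hy => hrpos y (by simp [hy]))
          simp only [List.sum_cons]; omega
      suffices hsuf : (r.length : ℤ) ≤ k - 1 by omega
      obtain ⟨p, hpdef⟩ : ∃ p : ℤ, p = k + 1 - (a + b + c) := ⟨_, rfl⟩
      by_cases hp : p ≤ -1
      · -- easy case: r.sum = 2k+1-(a+b+c) ≤ k-1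
        omega
      · push_neg at hp
        have hp0 : 0 ≤ p := by omega
        -- μ is nonempty
        have hμne : μ ≠ [] := by
          intro hμe
          rw [hμe] at hk
          simp at hk
          omega
        -- the first link
        have hP'eq : smlink 3 (a::b::c::r, μ)
            = (rsort ([a+p, b+p, c+p] ++ μ), r) := by
          rw [smlink3_cons (p := p) a b c r μ (by omega)]
          rw [strip_rsort_of_pos (by
            intro x hx
            simp only [List.mem_append, List.mem_cons] at hx
            rcases hx with (rfl | rfl | rfl | h) | h
            · omega
            · omega
            · omega
            · simp at h
            · exact h2.2 x h), strip_eq_self hrpos]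
        obtain ⟨lam', hlam'⟩ : ∃ l, rsort ([a+p, b+p, c+p] ++ μ) = l := ⟨_, rfl⟩
        have hlam'sorted : lam'.Pairwise (· ≥ ·) := hlam' ▸ sorted_rsort _
        have hlam'perm : ∀ pred : ℤ → Bool,
            lam'.countP pred = ([a+p, b+p, c+p]).countP pred + μ.countP pred := by
          intro pred
          rw [← hlam', (perm_rsort _).countP_eq, List.countP_append]
        have hlam'mem : ∀ x, x ∈ lam' ↔ (x ∈ [a+p, b+p, c+p] ∨ x ∈ μ) := by
          intro x
          rw [← hlam', (perm_rsort _).mem_iff, List.mem_append]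
        have hlam'sum : lam'.sum = (a+p) + (b+p) + (c+p) + k := by
          rw [← hlam', (perm_rsort _).sum_eq, List.sum_append, ← hk]
          simp [List.sum_cons]
          ring
        have hlam'len : lam'.length = 3 + μ.length := by
          rw [← hlam', (perm_rsort _).length_eq]
          simp
          omega
        have hμlen1 : 1 ≤ μ.length := by
          rcases μ with _ | _
          · simp at hμne
          · simp
        obtain ⟨A, B, C, r', hABC⟩ : ∃ A B C r', lam' = A::B::C::r' := by
          rcases lam' with _ | ⟨A, _ | ⟨B, _ | ⟨C, r'⟩⟩⟩
          · simp at hlam'len; omega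
          · simp at hlam'len; omega
          · simp at hlam'len; omega
          · exact ⟨A, B, C, r', rfl⟩
        rw [hABC] at hlam'sorted hlam'perm hlam'mem hlam'sum hlam'len
        have hAB : B ≤ A := List.rel_of_pairwise_cons hlam'sorted (a' := B) (by simp)
        have hBC : C ≤ B := List.rel_of_pairwise_cons hlam'sorted.of_cons (a' := C) (by simp)
        have hCr' : ∀ x ∈ r', x ≤ C :=
          fun x hx => List.rel_of_pairwise_cons hlam'sorted.of_cons.of_cons (a' := x) hx
        have hr'pos : ∀ x ∈ r', (0:ℤ) < x := by
          intro x hx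
          rcases (hlam'mem x).mp (by simp [hx]) with h | h
          · simp only [List.mem_cons] at h
            rcases h with rfl | rfl | rfl | h
            · omega
            · omega
            · omega
            · simp at h
          · exact h2.2 x h
        have hAa : a + p ≤ A := head_max hlam'sorted ((hlam'mem _).mpr (Or.inl (by simp)))
        have hBb : b + p ≤ B := by
          apply second_ge hlam'sorted
          rw [hlam'perm, countP_triple]
          rw [if_pos (show b+p ≤ a+p by omega), if_pos (le_refl (b+p))]
          omega
        have hCc : c + p ≤ C := by
          apply third_ge hlam'sorted
          rw [hlam'perm, countP_triple]
          rw [if_pos (show c+p ≤ a+p by omega), if_pos (show c+p ≤ b+p by omega),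
            if_pos (le_refl (c+p))]
          omega
        have hr'len : r'.length = μ.length := by simp at hlam'len; omega
        -- n ≥ 2
        obtain ⟨n'', hn''⟩ : ∃ n'', n = n'' + 2 := by
          rcases n with _ | ⟨_ | n''⟩
          · rw [Function.iterate_zero_apply] at hT
            have h3 := congrArg (fun q => q.1.length) hT
            simp only [List.length_cons, List.length_replicate] at h3
            exfalso
            exact hrne (List.length_eq_zero_iff.mp (by omega))
          · rw [Function.iterate_one] at hT
            have := congrArg (fun q => q.2) hT
            rw [hP'eq] at this
            simp only at this
            have h4 := congrArg (fun q => q.1.length) hT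
            rw [hP'eq, hlam', hABC] at h4
            simp only [List.length_cons, List.length_replicate] at h4
            exfalso
            omega
          · exact ⟨n'', by omega⟩
        subst hn''
        obtain ⟨hv1, hT1⟩ := iterate_shift hv hT
        rw [hP'eq, hlam', hABC] at hv1 hT1
        obtain ⟨hv2, hT2⟩ := iterate_shift hv1 hT1
        -- validity of the second link
        have hvP' : ValidLink 3 (A::B::C::r', r) := by
          have := hv 1 (by omega)
          rw [Function.iterate_one, hP'eq, hlam', hABC] at this
          exact this
        obtain ⟨p', hp'def⟩ : ∃ p' : ℤ, p' = r.sum + 1 - (A + B + C) := ⟨_, rfl⟩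
        have hCp' : 0 ≤ C + p' := by
          have := validlink3_cons hvP'
          omega
        -- the second link
        have hP''eq : smlink 3 (A::B::C::r', r)
            = (strip (rsort ([A+p', B+p', C+p'] ++ r)), r') := by
          rw [smlink3_cons (p := p') A B C r' r (by omega), strip_eq_self hr'pos]
        rw [hP''eq] at hv2 hT2
        obtain ⟨lam'', hlam''⟩ : ∃ l, strip (rsort ([A+p', B+p', C+p'] ++ r)) = l := ⟨_, rfl⟩
        rw [hlam''] at hv2 hT2
        have h1'' : IsPartition lam'' := hlam'' ▸ isPartition_strip_rsort _
        have h2'' : IsPartition r' :=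
          ⟨hlam'sorted.of_cons.of_cons.of_cons, hr'pos⟩
        -- arithmetic facts
        have hABCle : a + b + c + 3*p ≤ A + B + C := by omega
        have hr'sum : A + B + C + r'.sum = (a+p) + (b+p) + (c+p) + k := by
          simp only [List.sum_cons] at hlam'sum
          omega
        -- length of lam''
        have hlam''len : (lam''.length : ℤ)
            = ((([A+p', B+p', C+p']).countP (fun t => decide (0 < t))) : ℤ) + r.length := by
          rw [← hlam'', strip]
          rw [← List.countP_eq_length_filter, (perm_rsort _).countP_eq, List.countP_append]
          have : r.countP (fun t => decide (0 < t)) = r.length :=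
            List.countP_eq_length.mpr (fun x hx => by simpa using hrpos x hx)
          rw [this]
          push_cast
          ring
        -- Gorenstein dichotomy for lam''
        by_cases hg2 : 2 ≤ lam''.getD 0 0
        · -- apply induction hypothesis to P''
          have hb'' := IH n'' (by omega) (lam'', r') h1'' h2'' hv2 hT2 hg2
          simp only at hb''
          rw [hlam''len] at hb''
          by_cases hC' : 0 < C + p'
          · -- all three shifted parts positive
            have hcnt : ([A+p', B+p', C+p']).countP (fun t => decide (0 < t)) = 3 := by
              rw [countP_pos_triple]
              rw [if_pos (by omega : 0 < A + p'), if_pos (by omega : 0 < B + p'),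
                if_pos hC']
            rw [hcnt] at hb''
            omega
          · -- C + p' = 0
            have hC0 : C + p' = 0 := by omega
            have hABk : A + B = r.sum + 1 := by omega
            have hcnt : (([A+p', B+p', C+p']).countP (fun t => decide (0 < t)) : ℤ)
                = (if 0 < A+p' then 1 else 0) + (if 0 < B+p' then 1 else 0) := by
              rw [countP_pos_triple]
              rw [if_neg (by omega : ¬ (0:ℤ) < C + p')]
              push_cast
              split_ifs <;> omega
            rw [hcnt] at hb''
            by_cases hC3 : p + 3 ≤ C
            · split_ifs at hb'' <;> omega
            · -- C ≤ p + 2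
              push_neg at hC3
              by_cases hA : A ≤ C
              · -- A = B = C
                have hABC3 : A = C ∧ B = C := by omega
                have ha2' : a = 2 := by omega
                have hbc1 : b = 1 ∧ c = 1 ∧ C = p + 2 ∧ k = p + 3 := by omega
                -- count elements ≥ C
                have hcount3 := count3_ge r' (le_trans hBC hAB) hBC
                rw [hlam'perm, countP_triple] at hcount3
                rw [if_pos (show C ≤ a+p by omega), if_neg (show ¬ C ≤ b+p by omega),
                  if_neg (show ¬ C ≤ c+p by omega)] at hcount3
                have hμ2 : 2 ≤ μ.countP (fun t => decide (C ≤ t)) := by omega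
                have := count_le_sum h2.2 (show (0:ℤ) ≤ C by omega) 2 hμ2
                rw [hk] at this
                push_cast at this
                omega
              · push_neg at hA
                by_cases hB : C < B
                · -- two positive shifted parts
                  rw [if_pos (by omega : 0 < A + p'), if_pos (by omega : 0 < B + p')] at hb''
                  omega
                · -- B = C
                  push_neg at hB
                  have hBCeq : B = C := by omega
                  by_cases hCp2 : C = p + 2
                  · rw [if_pos (by omega : 0 < A + p')] at hb''
                    split_ifs at hb'' <;> omega
                  · -- C = p + 1, c = 1, b = 1
                    have hCp1 : C = p + 1 := by omega
                    have hc1' : c = 1 := by omega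
                    have hb1 : b = 1 := by omega
                    have hAk : A = k := by omega
                    have hkp3 : p + 3 ≤ k := by omega
                    have hAmem : A ∈ [a+p, b+p, c+p] ∨ A ∈ μ := (hlam'mem A).mp (by simp)
                    have hAμ : A ∈ μ := by
                      rcases hAmem with h | h
                      · simp only [List.mem_cons] at h
                        rcases h with h | h | h | h
                        · omega
                        · omega
                        · omega
                        · simp at h
                      · exact h
                    -- two elements ≥ p+2 : a+p = k-1 and A = k
                    have hcnt2 : 2 ≤ (A::B::C::r').countP (fun t => decide (p+2 ≤ t)) := by
                      rw [hlam'perm, countP_triple]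
                      rw [if_pos (show p+2 ≤ a+p by omega)]
                      have := countP_pos_of_mem hAμ (show p+2 ≤ A by omega)
                      omega
                    have := second_ge hlam'sorted hcnt2
                    omega
        · -- lam'' is all ones: Gorenstein case
          push_neg at hg2
          have hsum'' := sumlem n'' (lam'', r') h1'' h2'' hv2 hT2
          have hgor := gorenstein n'' (lam'', r') h1'' h2'' hsum'' hT2 (by show lam''.getD 0 0 ≤ 1; omega)
          simp only at hgor
          -- t = 1, μ = [k]
          have hμ1 : μ.length = 1 := by omega
          obtain ⟨m, hμm⟩ : ∃ m, μ = [m] := by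
            rcases μ with _ | ⟨m, _ | _⟩
            · simp at hμ1
            · exact ⟨_, rfl⟩
            · simp at hμ1
          have hmk : m = k := by rw [hμm] at hk; simpa using hk
          rw [hmk] at hμm
          obtain ⟨D, hr'D⟩ : ∃ D, r' = [D] := by
            have : r'.length = 1 := by omega
            rcases r' with _ | ⟨D, _ | _⟩
            · simp at this
            · exact ⟨_, rfl⟩
            · simp at this
          rw [hr'D] at hlam'mem hCr' hr'sum hlam'perm
          have hDC : D ≤ C := hCr' D (by simp)
          -- D is the minimum of {a+p, b+p, c+p, k}
          have hDmem : D ∈ [a+p, b+p, c+p] ∨ D ∈ [k] := by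
            have := (hlam'mem D).mp (by simp)
            rwa [hμm] at this
          have hmemge : ∀ x, (x ∈ [a+p, b+p, c+p] ∨ x ∈ [k]) → D ≤ x := by
            intro x hx
            have hmem := (hlam'mem x).mpr (by rwa [hμm])
            simp only [List.mem_cons] at hmem
            rcases hmem with rfl | rfl | rfl | rfl | h
            · omega
            · omega
            · omega
            · omega
            · simp at h
          have hDa : D ≤ a + p := hmemge _ (Or.inl (by simp))
          have hDb : D ≤ b + p := hmemge _ (Or.inl (by simp))
          have hDc : D ≤ c + p := hmemge _ (Or.inl (by simp))
          have hDk : D ≤ k := hmemge _ (Or.inr (by simp))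
          simp only [List.sum_cons, List.sum_nil] at hr'sum
          by_cases hkc : k ≤ c + p
          · -- D = k, p' = -p, A + p' ≥ a ≥ 2 gives contradiction
            have hDval : D = k := by
              rcases hDmem with h | h
              · simp only [List.mem_cons] at h
                rcases h with rfl | rfl | rfl | h
                · omega
                · omega
                · omega
                · simp at h
              · simp at h; omega
            have hp'val : p' = -p := by omega
            have hApos : 0 < A + p' := by omega
            have hAmem'' : A + p' ∈ lam'' := by
              rw [← hlam'']
              exact mem_strip_rsort (by simp) hApos
            have := mem_le_getD0 h1''.1 hAmem''
            omega
          · -- D = c + p, p' = c - k, validity fails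
            push_neg at hkc
            have hDval : D = c + p := by
              rcases hDmem with h | h
              · simp only [List.mem_cons] at h
                rcases h with rfl | rfl | rfl | h
                · omega
                · omega
                · omega
                · simp at h
              · simp at h; omega
            -- C ≤ b + p via counting
            have hcount3 := count3_ge [D] (le_trans hBC hAB) hBC
            rw [hlam'perm, hμm, countP_triple] at hcount3
            have hCb : C ≤ b + p := by
              by_contra hCb
              push_neg at hCb
              rw [if_neg (show ¬ C ≤ b+p by omega), if_neg (show ¬ C ≤ c+p by omega)] at hcount3
              have hcm : ([k]).countP (fun t => decide (C ≤ t)) ≤ 1 := by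
                simp [List.countP_cons]
                split_ifs <;> omega
              split_ifs at hcount3 <;> omega
            -- p' = c - k
            have hp'val : p' = c - k := by omega
            omega

end Aux

/-- A non-Gorenstein codimension-3 decoration `(λ, μ)` (i.e. with `λ₁ ≥ 2`),
with `k = ∑μⱼ` and `b` nonzero parts of `λ`, satisfies `b ≤ k + 2`. -/
theorem stmt14 (P : List ℤ × List ℤ) (k : ℤ) (hk : P.2.sum = k)
    (h : IsDecoration 3 P) (hng : 2 ≤ P.1.getD 0 0) :
    (P.1.length : ℤ) ≤ k + 2 := by
  obtain ⟨h1, h2, n, hv, hT⟩ := h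
  have := Aux.mainlem n P h1 h2 hv hT hng
  omega
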